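/- For a positive integer n, let G = ⟨a, x, y' | x^{2n+1} = 1, y'⁴ = 1, a²xⁿ = y'²⟩ and let N be the normal closure of x in G. Then G/N ≅ ⟨a, y' | y'⁴ = 1, a² = y'²⟩, which is nonabelian; in particular G/N is not isomorphic to ℤ/4. -/

import Mathlib

open FreeGroup

/-- Generators `a`, `x`, `y'` of the three-generator presentation. -/
def a3 : FreeGroup (Fin 3) := FreeGroup.of 0
def x3 : FreeGroup (Fin 3) := FreeGroup.of 1
def y3 : FreeGroup (Fin 3) := FreeGroup.of 2

/-- The relations of `G = ⟨a, x, y' | x^{2n+1} = 1, y'⁴ = 1, a²xⁿ = y'²⟩`. -/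
def relsG (n : ℕ) : Set (FreeGroup (Fin 3)) :=
  {x3 ^ (2 * n + 1), y3 ^ 4, a3 ^ 2 * x3 ^ n * (y3 ^ 2)⁻¹}

/-- Generators `a`, `y'` of the two-generator presentation. -/
def a2 : FreeGroup (Fin 2) := FreeGroup.of 0
def y2 : FreeGroup (Fin 2) := FreeGroup.of 1

/-- The relations of `⟨a, y' | y'⁴ = 1, a² = y'²⟩`. -/
def rels2 : Set (FreeGroup (Fin 2)) := {y2 ^ 4, a2 ^ 2 * (y2 ^ 2)⁻¹}

/-- The normal closure of `x` in `G`. -/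
abbrev N (n : ℕ) : Subgroup (PresentedGroup (relsG n)) :=
  Subgroup.normalClosure {(PresentedGroup.of 1 : PresentedGroup (relsG n))}

section aux

/-- relations hold in a presented group -/
lemma mk_rel_eq_one {α : Type*} {rels : Set (FreeGroup α)} {r : FreeGroup α} (h : r ∈ rels) :
    PresentedGroup.mk rels r = 1 := by
  have : r ∈ Subgroup.normalClosure rels := Subgroup.subset_normalClosure h
  exact (QuotientGroup.eq_one_iff r).mpr this

/-- the map G → P2 killing x -/
noncomputable def phi (n : ℕ) : PresentedGroup (relsG n) →* PresentedGroup rels2 :=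
  PresentedGroup.toGroup (f := fun i => if i = 0 then (PresentedGroup.of 0 : PresentedGroup rels2)
      else if i = 1 then 1 else PresentedGroup.of 1) (by
    intro r hr
    rcases hr with h | h | h <;> subst h <;>
      simp only [x3, y3, a3, _root_.map_mul, map_pow, _root_.map_inv, FreeGroup.lift_apply_of] <;> norm_num
    · exact mk_rel_eq_one (Set.mem_insert _ _)
    · have h1 : (PresentedGroup.of 0 : PresentedGroup rels2) ^ 2 * ((PresentedGroup.of 1 : PresentedGroup rels2) ^ 2)⁻¹ = 1 := by
        have := mk_rel_eq_one (rels := rels2) (r := a2 ^ 2 * (y2 ^ 2)⁻¹) (Or.inr rfl)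
        simpa [a2, y2, _root_.map_mul, map_pow, _root_.map_inv, PresentedGroup.of] using this
      simpa using h1)

noncomputable def phiBar (n : ℕ) : (PresentedGroup (relsG n) ⧸ N n) →* PresentedGroup rels2 :=
  QuotientGroup.lift (N n) (phi n) (by
    intro g hg
    refine Subgroup.normalClosure_le_normal ?_ hg
    rintro g ⟨rfl⟩
    simp only [SetLike.mem_coe, MonoidHom.mem_ker]
    show phi n (PresentedGroup.of 1) = 1
    simp [phi, PresentedGroup.toGroup.of])

noncomputable def psi (n : ℕ) : PresentedGroup rels2 →* (PresentedGroup (relsG n) ⧸ N n) :=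
  PresentedGroup.toGroup (f := fun i => if i = 0
      then QuotientGroup.mk' (N n) (PresentedGroup.of 0)
      else QuotientGroup.mk' (N n) (PresentedGroup.of 2)) (by
    have hx1 : QuotientGroup.mk' (N n) (PresentedGroup.of 1) = 1 := by
      rw [QuotientGroup.mk'_apply, QuotientGroup.eq_one_iff]
      exact Subgroup.subset_normalClosure rfl
    intro r hr
    rcases hr with h | h <;> subst h <;>
      simp only [y2, a2, _root_.map_mul, map_pow, _root_.map_inv, FreeGroup.lift_apply_of] <;> norm_num
    · have h4 : (PresentedGroup.of 2 : PresentedGroup (relsG n)) ^ 4 = 1 := by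
        have := mk_rel_eq_one (rels := relsG n) (r := y3 ^ 4) (Or.inr (Or.inl rfl))
        simpa [y3, map_pow, PresentedGroup.of] using this
      have := congrArg (QuotientGroup.mk' (N n)) h4
      simpa [map_pow] using this
    · have hG : (PresentedGroup.of 0 : PresentedGroup (relsG n)) ^ 2 *
          (PresentedGroup.of 1 : PresentedGroup (relsG n)) ^ n *
          ((PresentedGroup.of 2 : PresentedGroup (relsG n)) ^ 2)⁻¹ = 1 := by
        have := mk_rel_eq_one (rels := relsG n) (r := a3 ^ 2 * x3 ^ n * (y3 ^ 2)⁻¹)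
          (Or.inr (Or.inr rfl))
        simpa [a3, x3, y3, _root_.map_mul, map_pow, _root_.map_inv, PresentedGroup.of] using this
      have := congrArg (QuotientGroup.mk' (N n)) hG
      simp only [_root_.map_mul, map_pow, _root_.map_inv, _root_.map_one] at this
      rw [hx1] at this
      simpa using this)

noncomputable def q8hom : PresentedGroup rels2 →* QuaternionGroup 2 :=
  PresentedGroup.toGroup (f := fun i => if i = 0 then QuaternionGroup.xa 1
      else QuaternionGroup.xa 0) (by
    intro r hr
    rcases hr with h | h <;> subst h <;>
      simp only [y2, a2, _root_.map_mul, map_pow, _root_.map_inv, FreeGroup.lift_apply_of] <;> norm_num)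

end aux

/-- For `n ≥ 1` let `G = ⟨a, x, y' | x^{2n+1} = 1, y'⁴ = 1, a²xⁿ = y'²⟩` and let `N` be the
normal closure of `x` in `G`. Then `G/N ≅ ⟨a, y' | y'⁴ = 1, a² = y'²⟩`, which is
nonabelian; in particular `G/N` is not isomorphic to `ℤ/4`. -/
theorem quotient_by_x_iso_and_nonabelian (n : ℕ) (hn : 0 < n) :
    Nonempty ((PresentedGroup (relsG n) ⧸ N n) ≃* PresentedGroup rels2) ∧
      (∃ g h : PresentedGroup (relsG n) ⧸ N n, g * h ≠ h * g) ∧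
      ¬ Nonempty ((PresentedGroup (relsG n) ⧸ N n) ≃* Multiplicative (ZMod 4)) := by
  have hx1 : QuotientGroup.mk' (N n) (PresentedGroup.of 1) = 1 := by
    rw [QuotientGroup.mk'_apply, QuotientGroup.eq_one_iff]
    exact Subgroup.subset_normalClosure rfl
  have h1 : (psi n).comp (phiBar n) = MonoidHom.id _ := by
    apply QuotientGroup.monoidHom_ext
    apply PresentedGroup.ext
    intro i
    fin_cases i <;>
      simp [phiBar, phi, psi, PresentedGroup.toGroup.of, hx1]
  have h2 : (phiBar n).comp (psi n) = MonoidHom.id _ := by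
    apply PresentedGroup.ext
    intro i
    fin_cases i <;>
      simp [phiBar, phi, psi, PresentedGroup.toGroup.of]
  have e : (PresentedGroup (relsG n) ⧸ N n) ≃* PresentedGroup rels2 :=
    MonoidHom.toMulEquiv (phiBar n) (psi n) h1 h2
  have hnab : ∃ g h : PresentedGroup (relsG n) ⧸ N n, g * h ≠ h * g := by
    refine ⟨QuotientGroup.mk' (N n) (PresentedGroup.of 0),
      QuotientGroup.mk' (N n) (PresentedGroup.of 2), fun hc => ?_⟩
    have := congrArg (q8hom.comp (phiBar n)) hc
    simp only [_root_.map_mul, MonoidHom.comp_apply] at this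
    have ha : q8hom ((phiBar n) (QuotientGroup.mk' (N n) (PresentedGroup.of 0)))
        = QuaternionGroup.xa 1 := by
      simp [q8hom, phiBar, phi, PresentedGroup.toGroup.of]
    have hb : q8hom ((phiBar n) (QuotientGroup.mk' (N n) (PresentedGroup.of 2)))
        = QuaternionGroup.xa 0 := by
      simp [q8hom, phiBar, phi, PresentedGroup.toGroup.of]
    rw [ha, hb] at this
    revert this
    decide
  refine ⟨⟨e⟩, hnab, ?_⟩
  rintro ⟨e'⟩
  obtain ⟨g, h, hgh⟩ := hnab
  exact hgh (e'.injective (by rw [_root_.map_mul, _root_.map_mul, mul_comm]))
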